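/- If the ε(t) satisfy Assumption 1 and (Â_R, Â_I, β̂) minimizes Q_{p+1}(θ) = (1/N) Σ_{t=1}^N |ε(t) − A e^{i β t²}|² over θ = (A_R, A_I, β), with A = A_R + i A_I, then Â_R → 0 and Â_I → 0 almost surely as N → ∞. -/

import Mathlib

open MeasureTheory ProbabilityTheory Filter Topology

noncomputable section

/-- **Assumption 1**: the noise variables `ε t` are i.i.d. complex-valued random variables,
whose real and imaginary parts are independent, each with mean `0` and variance `σ²/2`,
and with finite fourth moment. -/
structure Assumption1 {Ω : Type*} [MeasurableSpace Ω] (μ : Measure Ω)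
    (ε : ℕ → Ω → ℂ) (σ2 : ℝ) : Prop where
  measurable : ∀ t, Measurable (ε t)
  identDistrib : ∀ s t, IdentDistrib (ε s) (ε t) μ μ
  indep : iIndepFun ε μ
  indep_re_im : ∀ t, IndepFun (fun ω => (ε t ω).re) (fun ω => (ε t ω).im) μ
  mean_re : ∀ t, ∫ ω, (ε t ω).re ∂μ = 0
  mean_im : ∀ t, ∫ ω, (ε t ω).im ∂μ = 0
  var_re : ∀ t, variance (fun ω => (ε t ω).re) μ = σ2 / 2
  var_im : ∀ t, variance (fun ω => (ε t ω).im) μ = σ2 / 2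
  fourth_moment : ∀ t, Integrable (fun ω => ‖ε t ω‖ ^ 4) μ

/-- One elementary chirp component `A e^{i β t²}`. -/
def chirp (A : ℂ) (β : ℝ) (t : ℕ) : ℂ :=
  A * Complex.exp (Complex.I * (β : ℂ) * (t : ℂ) ^ 2)

/-- Residual sum of squares for the one-component model; `θ = (A_R, A_I, β)`. -/
def Q (y : ℕ → ℂ) (N : ℕ) (θ : ℝ × ℝ × ℝ) : ℝ :=
  ∑ t ∈ Finset.Icc 1 N,
    ‖y t - chirp (θ.1 + θ.2.1 * Complex.I) θ.2.2 t‖ ^ 2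

/-- The parameter space `Θ₁ = [-M, M] × [-M, M] × [0, 2π]`. -/
def Theta1 (M : ℝ) : Set (ℝ × ℝ × ℝ) :=
  Set.Icc (-M) M ×ˢ Set.Icc (-M) M ×ˢ Set.Icc 0 (2 * Real.pi)


namespace Complex

/-- Compatibility: the complex absolute value as an `AbsoluteValue`, equal to the norm. -/
def abs : AbsoluteValue ℂ ℝ where
  toFun z := ‖z‖
  map_mul' := norm_mul
  nonneg' := norm_nonneg
  eq_zero' _ := norm_eq_zero
  add_le' := norm_add_le

theorem norm_eq_abs (z : ℂ) : ‖z‖ = Complex.abs z := rfl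

theorem continuous_abs : Continuous Complex.abs := continuous_norm

theorem abs_I : Complex.abs I = 1 := norm_I

theorem abs_ofReal (r : ℝ) : Complex.abs (r : ℂ) = |r| := by
  show ‖(r : ℂ)‖ = |r|
  simp

theorem abs_natCast (n : ℕ) : Complex.abs (n : ℂ) = n := by
  show ‖(n : ℂ)‖ = n
  simp

theorem abs_conj (z : ℂ) : Complex.abs ((starRingEnd ℂ) z) = Complex.abs z := by
  show ‖(starRingEnd ℂ) z‖ = ‖z‖
  simp

theorem abs_re_le_abs (z : ℂ) : |z.re| ≤ Complex.abs z := abs_re_le_norm z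

theorem abs_im_le_abs (z : ℂ) : |z.im| ≤ Complex.abs z := abs_im_le_norm z

theorem abs_le_abs_re_add_abs_im (z : ℂ) : Complex.abs z ≤ |z.re| + |z.im| :=
  norm_le_abs_re_add_abs_im z

theorem re_le_abs (z : ℂ) : z.re ≤ Complex.abs z := re_le_norm z

theorem sq_abs (z : ℂ) : Complex.abs z ^ 2 = normSq z := Complex.sq_norm z

theorem abs_exp_ofReal_mul_I (x : ℝ) : Complex.abs (exp (x * I)) = 1 := norm_exp_ofReal_mul_I x

theorem abs_exp_sub_one_le {x : ℂ} (hx : Complex.abs x ≤ 1) :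
    Complex.abs (exp x - 1) ≤ 2 * Complex.abs x := norm_exp_sub_one_le hx

end Complex


section UniformSLLNAux

open Finset

variable {Ω : Type*} [MeasurableSpace Ω] {μ : Measure Ω}

/-- The conjugate chirp phase `e^{-iβt²}`. -/
def phase (β : ℝ) (t : ℕ) : ℂ := Complex.exp (-(Complex.I * (β : ℂ) * (t : ℂ) ^ 2))

lemma abs_phase (β : ℝ) (t : ℕ) : Complex.abs (phase β t) = 1 := by
  have : -(Complex.I * (β : ℝ) * ((t : ℕ) : ℂ) ^ 2) = ((-(β * t ^ 2) : ℝ) : ℂ) * Complex.I := by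
    push_cast; ring
  rw [phase, this, Complex.abs_exp_ofReal_mul_I]

lemma phase_sub (β γ : ℝ) (t : ℕ) :
    phase β t - phase γ t = phase γ t * (phase (β - γ) t - 1) := by
  rw [phase, phase, phase, mul_sub, mul_one, ← Complex.exp_add]
  congr 2
  push_cast
  ring

lemma abs_phase_sub_le {β γ : ℝ} (t : ℕ) (h : |β - γ| * (t : ℝ) ^ 2 ≤ 1) :
    Complex.abs (phase β t - phase γ t) ≤ 2 * (|β - γ| * (t : ℝ) ^ 2) := by
  have habs : Complex.abs (-(Complex.I * ((β - γ : ℝ) : ℂ) * ((t : ℕ) : ℂ) ^ 2)) =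
      |β - γ| * (t : ℝ) ^ 2 := by
    rw [map_neg_eq_map]
    rw [map_mul, map_mul, Complex.abs_I, one_mul, Complex.abs_ofReal, map_pow,
      Complex.abs_natCast]
  rw [phase_sub, map_mul, abs_phase, one_mul]
  calc Complex.abs (phase (β - γ) t - 1) ≤
      2 * Complex.abs (-(Complex.I * ((β - γ : ℝ) : ℂ) * ((t : ℕ) : ℂ) ^ 2)) :=
        Complex.abs_exp_sub_one_le (by rw [habs]; exact h)
    _ = 2 * (|β - γ| * (t : ℝ) ^ 2) := by rw [habs]


lemma exp_le_chord {B t x : ℝ} (hB : 0 < B) (hx : |x| ≤ B) :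
    Real.exp (t * x) ≤ Real.cosh (t * B) + x * (Real.sinh (t * B) / B) := by
  have hBne : B ≠ 0 := hB.ne'
  have h1 : -B ≤ x := (abs_le.1 hx).1
  have h2 : x ≤ B := (abs_le.1 hx).2
  set a : ℝ := (B - x) / (2 * B) with ha_def
  set b : ℝ := (B + x) / (2 * B) with hb_def
  have ha : 0 ≤ a := by apply div_nonneg <;> linarith
  have hb : 0 ≤ b := by apply div_nonneg <;> linarith
  have hab : a + b = 1 := by rw [ha_def, hb_def, ← add_div, div_eq_one_iff_eq (by positivity)]; ring
  have key := convexOn_exp.2 (Set.mem_univ (t * (-B))) (Set.mem_univ (t * B)) ha hb hab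
  have harg : a • (t * (-B)) + b • (t * B) = t * x := by
    simp only [smul_eq_mul, ha_def, hb_def]; field_simp; ring
  rw [harg] at key
  refine key.trans (le_of_eq ?_)
  simp only [smul_eq_mul, Real.cosh_eq, Real.sinh_eq, ha_def, hb_def, mul_neg, Real.exp_neg]
  field_simp
  ring

lemma mgf_le_of_bounded [IsProbabilityMeasure μ] {X : Ω → ℝ} (hX : Measurable X)
    {B : ℝ} (hB : 0 < B) (hbdd : ∀ ω, |X ω| ≤ B) (hmean : ∫ ω, X ω ∂μ = 0) (t : ℝ) :
    mgf X μ t ≤ Real.exp (t ^ 2 * B ^ 2 / 2) := by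
  have hXint : Integrable X μ :=
    (integrable_const B).mono' hX.aestronglyMeasurable
      (ae_of_all _ fun ω => by simpa [Real.norm_eq_abs] using hbdd ω)
  have hint : Integrable (fun ω => Real.exp (t * X ω)) μ := by
    refine (integrable_const (Real.exp (|t| * B))).mono' (hX.const_mul t).exp.aestronglyMeasurable
      (ae_of_all _ fun ω => ?_)
    rw [Real.norm_eq_abs, Real.abs_exp]
    apply Real.exp_le_exp.2
    calc t * X ω ≤ |t * X ω| := le_abs_self _
      _ = |t| * |X ω| := abs_mul _ _
      _ ≤ |t| * B := by gcongr; exact hbdd ω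
  have step1 : mgf X μ t ≤ Real.cosh (t * B) := by
    have : mgf X μ t ≤ ∫ ω, (Real.cosh (t * B) + X ω * (Real.sinh (t * B) / B)) ∂μ := by
      refine integral_mono hint ((integrable_const _).add (hXint.mul_const _))
        fun ω => exp_le_chord hB (hbdd ω)
    rwa [integral_add (integrable_const _) (hXint.mul_const _), integral_const,
      integral_mul_const, hmean, zero_mul, add_zero, probReal_univ,
      smul_eq_mul, one_mul] at this
  calc mgf X μ t ≤ Real.cosh (t * B) := step1
    _ ≤ Real.exp ((t * B) ^ 2 / 2) := Real.cosh_le_exp_half_sq _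
    _ = Real.exp (t ^ 2 * B ^ 2 / 2) := by rw [mul_pow]


lemma chernoff_one_sided [IsProbabilityMeasure μ] (X : ℕ → Ω → ℝ)
    (hind : iIndepFun X μ) (hmeas : ∀ i, Measurable (X i))
    {B : ℝ} (hB : 0 < B) (hbdd : ∀ i ω, |X i ω| ≤ B) (hmean : ∀ i, ∫ ω, X i ω ∂μ = 0)
    (s : Finset ℕ) {a : ℝ} (ha : 0 < a) :
    μ {ω | a ≤ ∑ i ∈ s, X i ω} ≤
      ENNReal.ofReal (Real.exp (-(a ^ 2) / (2 * s.card * B ^ 2))) := by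
  rcases Nat.eq_zero_or_pos s.card with hcard | hcard
  · rw [Finset.card_eq_zero] at hcard
    subst hcard
    simp only [Finset.sum_empty]
    have : {ω : Ω | a ≤ (0:ℝ)} = ∅ := by
      ext ω; simp [not_le.2 ha]
    rw [this]; simp
  · have hn : (0:ℝ) < s.card := by exact_mod_cast hcard
    set t : ℝ := a / (s.card * B ^ 2) with ht_def
    have ht : 0 < t := by positivity
    have hXint : ∀ i, Integrable (fun ω => Real.exp (t * X i ω)) μ := by
      intro i
      refine (integrable_const (Real.exp (|t| * B))).mono'
        ((hmeas i).const_mul t).exp.aestronglyMeasurable (ae_of_all _ fun ω => ?_)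
      rw [Real.norm_eq_abs, Real.abs_exp]
      apply Real.exp_le_exp.2
      calc t * X i ω ≤ |t * X i ω| := le_abs_self _
        _ = |t| * |X i ω| := abs_mul _ _
        _ ≤ |t| * B := by gcongr; exact hbdd i ω
    have hsumint : Integrable (fun ω => Real.exp (t * (∑ i ∈ s, X i) ω)) μ :=
      hind.integrable_exp_mul_sum hmeas fun i _ => hXint i
    have key := measure_ge_le_exp_mul_mgf (X := ∑ i ∈ s, X i) (μ := μ) (t := t) a ht.le hsumint
    have hmgf : mgf (∑ i ∈ s, X i) μ t ≤ Real.exp (s.card * (t ^ 2 * B ^ 2 / 2)) := by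
      rw [hind.mgf_sum hmeas]
      calc ∏ i ∈ s, mgf (X i) μ t ≤ ∏ i ∈ s, Real.exp (t ^ 2 * B ^ 2 / 2) :=
            Finset.prod_le_prod (fun i _ => mgf_nonneg)
              (fun i _ => mgf_le_of_bounded (hmeas i) hB (hbdd i) (hmean i) t)
        _ = Real.exp (s.card * (t ^ 2 * B ^ 2 / 2)) := by
            rw [Finset.prod_const, ← Real.exp_nat_mul]
    have hexp : Real.exp (-t * a) * Real.exp (s.card * (t ^ 2 * B ^ 2 / 2)) =
        Real.exp (-(a ^ 2) / (2 * s.card * B ^ 2)) := by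
      rw [← Real.exp_add]
      congr 1
      rw [ht_def]
      field_simp
      ring
    have hbound : (μ {ω | a ≤ (∑ i ∈ s, X i) ω}).toReal ≤
        Real.exp (-(a ^ 2) / (2 * s.card * B ^ 2)) := by
      refine key.trans ?_
      rw [← hexp]
      gcongr
    have hne : μ {ω | a ≤ (∑ i ∈ s, X i) ω} ≠ ⊤ := measure_ne_top _ _
    have := (ENNReal.le_ofReal_iff_toReal_le hne (Real.exp_nonneg _)).2 hbound
    convert this using 3
    simp [Finset.sum_apply]

lemma chernoff_complex [IsProbabilityMeasure μ] (Z : ℕ → Ω → ℂ)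
    (hind : iIndepFun Z μ) (hmeas : ∀ i, Measurable (Z i))
    {B : ℝ} (hB : 0 < B) (hbdd : ∀ i ω, Complex.abs (Z i ω) ≤ B)
    (hmean : ∀ i, ∫ ω, Z i ω ∂μ = 0)
    (s : Finset ℕ) {a : ℝ} (ha : 0 < a) :
    μ {ω | a ≤ Complex.abs (∑ i ∈ s, Z i ω)} ≤
      ENNReal.ofReal (4 * Real.exp (-((a / 2) ^ 2) / (2 * s.card * B ^ 2))) := by
  have hZint : ∀ i, Integrable (Z i) μ := fun i =>
    (integrable_const (B : ℝ)).mono' (hmeas i).aestronglyMeasurable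
      (ae_of_all _ fun ω => by
        simpa [Complex.norm_eq_abs] using hbdd i ω)
  have ha2 : 0 < a / 2 := by positivity
  -- the four real families
  have main : ∀ (f : ℂ → ℝ), Measurable f → (∀ z, |f z| ≤ Complex.abs z) →
      (∀ w : ℂ, f w = 0 → True) → (∀ i, ∫ ω, f (Z i ω) ∂μ = 0) →
      μ {ω | a / 2 ≤ ∑ i ∈ s, f (Z i ω)} ≤
        ENNReal.ofReal (Real.exp (-((a / 2) ^ 2) / (2 * s.card * B ^ 2))) := by
    intro f hf hfle _ hfmean
    exact chernoff_one_sided (fun i ω => f (Z i ω))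
      (hind.comp (fun i => f) (fun i => hf)) (fun i => hf.comp (hmeas i)) hB
      (fun i ω => (hfle _).trans (hbdd i ω)) hfmean s ha2
  have hre : ∀ i, ∫ ω, (Z i ω).re ∂μ = 0 := fun i => by
    have h := integral_re (𝕜 := ℂ) (hZint i)
    rw [hmean i] at h
    simpa using h
  have him : ∀ i, ∫ ω, (Z i ω).im ∂μ = 0 := fun i => by
    have h := integral_im (𝕜 := ℂ) (hZint i)
    rw [hmean i] at h
    simpa using h
  have h1 := main (fun z => z.re) Complex.measurable_re (fun z => Complex.abs_re_le_abs z)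
    (fun _ _ => trivial) hre
  have h2 := main (fun z => -z.re) Complex.measurable_re.neg
    (fun z => by rw [abs_neg]; exact Complex.abs_re_le_abs z) (fun _ _ => trivial)
    (fun i => by rw [integral_neg, hre i, neg_zero])
  have h3 := main (fun z => z.im) Complex.measurable_im (fun z => Complex.abs_im_le_abs z)
    (fun _ _ => trivial) him
  have h4 := main (fun z => -z.im) Complex.measurable_im.neg
    (fun z => by rw [abs_neg]; exact Complex.abs_im_le_abs z) (fun _ _ => trivial)
    (fun i => by rw [integral_neg, him i, neg_zero])
  have hsub : {ω | a ≤ Complex.abs (∑ i ∈ s, Z i ω)} ⊆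
      {ω | a / 2 ≤ ∑ i ∈ s, (Z i ω).re} ∪ {ω | a / 2 ≤ ∑ i ∈ s, -(Z i ω).re} ∪
      ({ω | a / 2 ≤ ∑ i ∈ s, (Z i ω).im} ∪ {ω | a / 2 ≤ ∑ i ∈ s, -(Z i ω).im}) := by
    intro ω hω
    simp only [Set.mem_setOf_eq] at hω
    have habs : a ≤ |(∑ i ∈ s, Z i ω).re| + |(∑ i ∈ s, Z i ω).im| :=
      hω.trans (Complex.abs_le_abs_re_add_abs_im _)
    have hre_sum : (∑ i ∈ s, Z i ω).re = ∑ i ∈ s, (Z i ω).re := Complex.re_sum s _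
    have him_sum : (∑ i ∈ s, Z i ω).im = ∑ i ∈ s, (Z i ω).im := Complex.im_sum s _
    have hcases : a / 2 ≤ |(∑ i ∈ s, Z i ω).re| ∨ a / 2 ≤ |(∑ i ∈ s, Z i ω).im| := by
      by_contra h
      push_neg at h
      linarith [h.1, h.2]
    rcases hcases with h | h
    · rcases le_abs.1 h with h' | h'
      · exact Or.inl (Or.inl (by simp only [Set.mem_setOf_eq, ← hre_sum]; exact h'))
      · refine Or.inl (Or.inr ?_)
        simp only [Set.mem_setOf_eq, Finset.sum_neg_distrib, ← hre_sum]
        exact h'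
    · rcases le_abs.1 h with h' | h'
      · exact Or.inr (Or.inl (by simp only [Set.mem_setOf_eq, ← him_sum]; exact h'))
      · refine Or.inr (Or.inr ?_)
        simp only [Set.mem_setOf_eq, Finset.sum_neg_distrib, ← him_sum]
        exact h'
  calc μ {ω | a ≤ Complex.abs (∑ i ∈ s, Z i ω)} ≤ _ := measure_mono hsub
    _ ≤ _ := le_trans (measure_union_le _ _) (by
        refine le_trans (add_le_add (measure_union_le _ _) (measure_union_le _ _)) ?_
        refine le_trans (add_le_add (add_le_add h1 h2) (add_le_add h3 h4)) ?_
        rw [← ENNReal.ofReal_add (by positivity) (by positivity),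
          ← ENNReal.ofReal_add (by positivity) (by positivity)]
        exact ENNReal.ofReal_le_ofReal (le_of_eq (by ring)))


lemma slln_Icc (X : ℕ → Ω → ℝ) (hint : Integrable (X 0) μ)
    (hindep : Pairwise (fun i j => IndepFun (X i) (X j) μ))
    (hident : ∀ i, IdentDistrib (X i) (X 0) μ μ) :
    ∀ᵐ ω ∂μ, Tendsto (fun N : ℕ => (∑ t ∈ Finset.Icc 1 N, X t ω) / N) atTop
      (𝓝 (∫ ω, X 0 ω ∂μ)) := by
  filter_upwards [strong_law_ae_real X hint hindep hident] with ω hω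
  have h1 : Tendsto (fun N : ℕ => ((N : ℝ) + 1) / N) atTop (𝓝 1) := by
    have h0 : Tendsto (fun N : ℕ => 1 + 1 / (N : ℝ)) atTop (𝓝 (1 + 0)) :=
      tendsto_const_nhds.add tendsto_one_div_atTop_nhds_zero_nat
    rw [add_zero] at h0
    refine h0.congr' ?_
    filter_upwards [eventually_ge_atTop 1] with N hN
    have : (N : ℝ) ≠ 0 := by positivity
    field_simp
  have h2 : Tendsto (fun N : ℕ => (∑ i ∈ Finset.range (N + 1), X i ω) / (N + 1)) atTop
      (𝓝 (∫ ω, X 0 ω ∂μ)) := by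
    have := hω.comp (tendsto_add_atTop_nat 1)
    refine this.congr fun N => ?_
    simp [Function.comp]
  have h3 : Tendsto (fun N : ℕ => (X 0 ω) * (1 / (N : ℝ))) atTop (𝓝 ((X 0 ω) * 0)) :=
    tendsto_const_nhds.mul tendsto_one_div_atTop_nhds_zero_nat
  have h4 := (h1.mul h2).sub h3
  rw [one_mul, mul_zero, sub_zero] at h4
  refine h4.congr' ?_
  filter_upwards [eventually_ge_atTop 1] with N hN
  have hNne : (N : ℝ) ≠ 0 := by positivity
  have hN1ne : (N : ℝ) + 1 ≠ 0 := by positivity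
  have hsum : ∑ t ∈ Finset.Icc 1 N, X t ω = ∑ i ∈ Finset.range (N + 1), X i ω - X 0 ω := by
    rw [← Finset.Ico_add_one_right_eq_Icc, Finset.sum_Ico_eq_sub _ (Nat.one_le_iff_ne_zero.2 (by omega)),
      Finset.sum_range_one]
  rw [hsum]
  field_simp


set_option maxHeartbeats 4000000 in
lemma uniform_chirp [IsProbabilityMeasure μ] (ε : ℕ → Ω → ℂ)
    (hmeas : ∀ t, Measurable (ε t)) (hind : iIndepFun ε μ)
    (hident : ∀ s t, IdentDistrib (ε s) (ε t) μ μ)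
    (hint : Integrable (ε 0) μ) (hmean : ∀ t, ∫ ω, ε t ω ∂μ = 0) {δ : ℝ} (hδ : 0 < δ) :
    ∀ᵐ ω ∂μ, ∀ᶠ N : ℕ in atTop, ∀ β ∈ Set.Icc (0:ℝ) (2 * Real.pi),
      Complex.abs (∑ t ∈ Finset.Icc 1 N, ε t ω * phase β t) ≤ δ * N := by
  have habs_int : Integrable (fun ω => Complex.abs (ε 0 ω)) μ := by
    simpa [Complex.norm_eq_abs] using hint.norm
  -- Step 1: choose the truncation level c
  have htail : Tendsto (fun n : ℕ =>
      ∫ ω, (if (n : ℝ) < Complex.abs (ε 0 ω) then Complex.abs (ε 0 ω) else 0) ∂μ)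
      atTop (𝓝 0) := by
    have key := tendsto_integral_of_dominated_convergence (μ := μ)
      (F := fun (n : ℕ) ω => if (n : ℝ) < Complex.abs (ε 0 ω) then Complex.abs (ε 0 ω) else 0)
      (f := fun _ => (0 : ℝ)) (bound := fun ω => Complex.abs (ε 0 ω))
      (fun n => ((Complex.continuous_abs.measurable.comp (hmeas 0)).ite
        (measurableSet_lt measurable_const
          (Complex.continuous_abs.measurable.comp (hmeas 0))) measurable_const).aestronglyMeasurable)
      habs_int
      (fun n => ae_of_all _ fun ω => by
        rw [Real.norm_eq_abs]
        split_ifs with h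
        · rw [abs_of_nonneg (AbsoluteValue.nonneg _ _)]
        · simpa using AbsoluteValue.nonneg _ _)
      (ae_of_all _ fun ω => by
        refine tendsto_const_nhds.congr' ?_
        filter_upwards [eventually_ge_atTop ⌈Complex.abs (ε 0 ω)⌉₊] with n hn
        rw [if_neg (not_lt.2 ((Nat.le_ceil _).trans (by exact_mod_cast hn)))])
    simpa using key
  obtain ⟨n₀, hn₀⟩ := ((htail.eventually (gt_mem_nhds (by positivity : (0:ℝ) < δ / 8))).and
    (eventually_ge_atTop 1)).exists
  set c : ℝ := (n₀ : ℝ) with hc_def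
  have hc1 : 1 ≤ c := by rw [hc_def]; exact_mod_cast hn₀.2
  have hc : 0 < c := lt_of_lt_of_le one_pos hc1
  -- truncation function
  set g : ℂ → ℂ := fun z => if Complex.abs z ≤ c then z else 0 with hg_def
  have hgmeas : Measurable g :=
    Measurable.ite (measurableSet_le Complex.continuous_abs.measurable measurable_const)
      measurable_id measurable_const
  have hgabs : ∀ z, Complex.abs (g z) ≤ c := fun z => by
    show Complex.abs (if Complex.abs z ≤ c then z else 0) ≤ c
    split_ifs with h
    · exact h
    · simpa using hc.le
  have hgint : ∀ t, Integrable (fun ω => g (ε t ω)) μ := fun t =>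
    (integrable_const c).mono' ((hgmeas.comp (hmeas t)).aestronglyMeasurable)
      (ae_of_all _ fun ω => by simpa [Complex.norm_eq_abs] using hgabs (ε t ω))
  set m : ℂ := ∫ ω, g (ε 0 ω) ∂μ with hm_def
  have hm_all : ∀ t, ∫ ω, g (ε t ω) ∂μ = m := fun t =>
    ((hident t 0).comp hgmeas).integral_eq
  have habs_m_c : Complex.abs m ≤ c := by
    rw [hm_def, ← Complex.norm_eq_abs]
    refine (norm_integral_le_integral_norm _).trans ?_
    calc ∫ ω, ‖g (ε 0 ω)‖ ∂μ ≤ ∫ _, c ∂μ := by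
          refine integral_mono ((hgint 0).norm) (integrable_const c) fun ω => ?_
          simpa [Complex.norm_eq_abs] using hgabs (ε 0 ω)
      _ = c := by simp
  have hdiff : ∀ z, Complex.abs (g z - z) = if c < Complex.abs z then Complex.abs z else 0 := by
    intro z
    show Complex.abs ((if Complex.abs z ≤ c then z else 0) - z) = _
    by_cases h : Complex.abs z ≤ c
    · simp [h, not_lt.2 h]
    · simp only [if_neg h, zero_sub, map_neg_eq_map, if_pos (not_le.1 h)]
  have heq_tail : ∫ ω, ‖g (ε 0 ω) - ε 0 ω‖ ∂μ =
      ∫ ω, (if c < Complex.abs (ε 0 ω) then Complex.abs (ε 0 ω) else 0) ∂μ := by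
    refine integral_congr_ae (ae_of_all _ fun ω => ?_)
    dsimp only
    rw [Complex.norm_eq_abs, hdiff]
  have habs_m : Complex.abs m < δ / 8 := by
    have hmeq : m = ∫ ω, (g (ε 0 ω) - ε 0 ω) ∂μ := by
      rw [integral_sub (hgint 0) hint, hmean 0, sub_zero]
    rw [hmeq, ← Complex.norm_eq_abs]
    exact lt_of_le_of_lt ((norm_integral_le_integral_norm _).trans heq_tail.le) hn₀.1
  have htail_int : Integrable
      (fun ω => if c < Complex.abs (ε 0 ω) then Complex.abs (ε 0 ω) else 0) μ := by
    refine habs_int.mono' ?_ (ae_of_all _ fun ω => ?_)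
    · exact ((Complex.continuous_abs.measurable.comp (hmeas 0)).ite
        (measurableSet_lt measurable_const
          (Complex.continuous_abs.measurable.comp (hmeas 0))) measurable_const).aestronglyMeasurable
    · rw [Real.norm_eq_abs]
      split_ifs with h
      · rw [abs_of_nonneg (AbsoluteValue.nonneg _ _)]
      · simpa using AbsoluteValue.nonneg _ _
  -- the bounded centered part and the tail part
  set φ : ℂ → ℝ := fun z => Complex.abs (z - g z + m) with hφ_def
  have hφmeas : Measurable φ :=
    Complex.continuous_abs.measurable.comp ((measurable_id.sub hgmeas).add_const m)
  have hφbound : ∀ z, φ z = Complex.abs (z - g z + m) := fun z => rfl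
  have hXint : Integrable (fun ω => φ (ε 0 ω)) μ := by
    refine (habs_int.add (integrable_const (2 * c))).mono'
      (hφmeas.comp (hmeas 0)).aestronglyMeasurable (ae_of_all _ fun ω => ?_)
    rw [Real.norm_eq_abs, hφ_def, abs_of_nonneg (AbsoluteValue.nonneg _ _)]
    simp only [← Complex.norm_eq_abs]
    calc ‖ε 0 ω - g (ε 0 ω) + m‖ ≤ ‖ε 0 ω - g (ε 0 ω)‖ + ‖m‖ := norm_add_le _ _
      _ ≤ (‖ε 0 ω‖ + ‖g (ε 0 ω)‖) + ‖m‖ := by gcongr; exact norm_sub_le _ _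
      _ ≤ ‖ε 0 ω‖ + 2 * c := by
          have h1 : ‖g (ε 0 ω)‖ ≤ c := by simpa [Complex.norm_eq_abs] using hgabs (ε 0 ω)
          have h2 : ‖m‖ ≤ c := by simpa [Complex.norm_eq_abs] using habs_m_c
          linarith
  have hXmean : ∫ ω, φ (ε 0 ω) ∂μ < δ / 4 := by
    have hle : ∫ ω, φ (ε 0 ω) ∂μ ≤
        ∫ ω, ((if c < Complex.abs (ε 0 ω) then Complex.abs (ε 0 ω) else 0) + Complex.abs m) ∂μ := by
      refine integral_mono hXint (htail_int.add (integrable_const _)) fun ω => ?_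
      dsimp only
      rw [hφ_def]
      calc Complex.abs (ε 0 ω - g (ε 0 ω) + m)
          ≤ Complex.abs (ε 0 ω - g (ε 0 ω)) + Complex.abs m := by
            simpa [Complex.norm_eq_abs] using norm_add_le (ε 0 ω - g (ε 0 ω)) m
        _ ≤ _ := by rw [Complex.abs.map_sub, hdiff]
    rw [integral_add htail_int (integrable_const _), integral_const, probReal_univ,
      one_smul] at hle
    have := hn₀.1
    linarith
  -- SLLN for the tail part
  have hW_ae : ∀ᵐ ω ∂μ, ∀ᶠ N : ℕ in atTop,
      ∑ t ∈ Finset.Icc 1 N, φ (ε t ω) ≤ δ / 2 * N := by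
    have hslln := slln_Icc (fun t ω => φ (ε t ω)) hXint
      (fun i j hij => (hind.comp (fun _ => φ) (fun _ => hφmeas)).indepFun hij)
      (fun i => (hident i 0).comp hφmeas)
    filter_upwards [hslln] with ω hω
    have hlt : ∫ ω, φ (ε 0 ω) ∂μ < δ / 2 := lt_trans hXmean (by linarith)
    filter_upwards [hω.eventually_lt_const hlt, eventually_ge_atTop 1]
      with N hN hN1
    have hN0 : (0:ℝ) < N := by exact_mod_cast hN1
    exact le_of_lt ((div_lt_iff₀ hN0).1 hN)
  -- bound on the bounded centered part
  have hYb : ∀ z, Complex.abs (g z - m) ≤ 2 * c := fun z => by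
    rw [← Complex.norm_eq_abs]
    calc ‖g z - m‖ ≤ ‖g z‖ + ‖m‖ := norm_sub_le _ _
      _ ≤ 2 * c := by
          have h1 : ‖g z‖ ≤ c := by simpa [Complex.norm_eq_abs] using hgabs z
          have h2 : ‖m‖ ≤ c := by simpa [Complex.norm_eq_abs] using habs_m_c
          linarith
  have hπ : 0 < Real.pi := Real.pi_pos
  -- grid parameters
  set q : ℝ := δ ^ 2 / (512 * c ^ 2) with hq_def
  have hq : 0 < q := by rw [hq_def]; positivity
  set L : ℕ := ⌈32 * Real.pi * c / δ⌉₊ + 7 with hL_def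
  have hL7 : (7:ℝ) ≤ (L:ℝ) := by
    rw [hL_def]; push_cast; linarith [Nat.cast_nonneg (α := ℝ) ⌈32 * Real.pi * c / δ⌉₊]
  have hLceil : 32 * Real.pi * c / δ ≤ (L:ℝ) := by
    rw [hL_def]; push_cast
    linarith [Nat.le_ceil (32 * Real.pi * c / δ)]
  set K : ℕ → ℕ := fun N => L * N ^ 2 + 1 with hK_def
  have hK_cast : ∀ N : ℕ, (K N : ℝ) = (L:ℝ) * (N:ℝ) ^ 2 + 1 := fun N => by
    rw [hK_def]; push_cast; ring
  have hKpos : ∀ N : ℕ, (0:ℝ) < (K N : ℝ) := fun N => by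
    rw [hK_cast]; positivity
  set E : ℕ → Set Ω := fun N => ⋃ j ∈ Finset.range (K N + 1),
    {ω | δ / 4 * N ≤ Complex.abs (∑ t ∈ Finset.Icc 1 N,
      (g (ε t ω) - m) * phase (2 * Real.pi * j / (K N : ℝ)) t)} with hE_def
  have hEbound : ∀ N : ℕ, μ (E N) ≤
      ENNReal.ofReal (((K N : ℝ) + 1) * (4 * Real.exp (-q * N))) := by
    intro N
    rcases Nat.eq_zero_or_pos N with hN0 | hN0
    · subst hN0
      refine le_trans (measure_mono (Set.subset_univ _)) ?_
      rw [measure_univ]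
      norm_num
      have := hKpos 0
      nlinarith
    · have hNR : (0:ℝ) < (N:ℝ) := by exact_mod_cast hN0
      have hstep : ∀ j : ℕ, μ {ω | δ / 4 * N ≤ Complex.abs (∑ t ∈ Finset.Icc 1 N,
          (g (ε t ω) - m) * phase (2 * Real.pi * j / (K N : ℝ)) t)} ≤
          ENNReal.ofReal (4 * Real.exp (-q * N)) := by
        intro j
        set γ := 2 * Real.pi * (j:ℝ) / (K N : ℝ) with hγ_def
        have hch := chernoff_complex (μ := μ) (fun t ω => (g (ε t ω) - m) * phase γ t)
          (hind.comp (fun t => fun z => (g z - m) * phase γ t)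
            (fun t => (hgmeas.sub_const m).mul_const _))
          (fun t => ((hgmeas.comp (hmeas t)).sub_const m).mul_const _)
          (B := 2 * c) (by positivity)
          (fun t ω => by
            rw [map_mul, abs_phase, mul_one]; exact hYb _)
          (fun t => by
            rw [integral_mul_const, integral_sub (hgint t) (integrable_const m), hm_all t,
              integral_const, probReal_univ, one_smul, sub_self, zero_mul])
          (Finset.Icc 1 N) (a := δ / 4 * N) (by positivity)
        refine hch.trans (le_of_eq ?_)
        congr 1
        have hcard : (Finset.Icc 1 N).card = N := by rw [Nat.card_Icc]; omega
        rw [hcard]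
        congr 1
        rw [hq_def]
        field_simp
        ring
      calc μ (E N) ≤ ∑ j ∈ Finset.range (K N + 1),
            μ {ω | δ / 4 * N ≤ Complex.abs (∑ t ∈ Finset.Icc 1 N,
              (g (ε t ω) - m) * phase (2 * Real.pi * j / (K N : ℝ)) t)} := by
            rw [hE_def]; exact measure_biUnion_finset_le _ _
        _ ≤ ∑ _j ∈ Finset.range (K N + 1), ENNReal.ofReal (4 * Real.exp (-q * N)) :=
            Finset.sum_le_sum fun j _ => hstep j
        _ = (K N + 1 : ℕ) * ENNReal.ofReal (4 * Real.exp (-q * N)) := by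
            rw [Finset.sum_const, Finset.card_range, nsmul_eq_mul]
        _ = ENNReal.ofReal (((K N : ℝ) + 1) * (4 * Real.exp (-q * N))) := by
            rw [← ENNReal.ofReal_natCast (K N + 1), ← ENNReal.ofReal_mul (by positivity)]
            push_cast
            ring_nf
  -- summability and Borel–Cantelli
  set r : ℝ := Real.exp (-q) with hr_def
  have hr0 : 0 < r := Real.exp_pos _
  have hr1 : r < 1 := Real.exp_lt_one_iff.2 (by linarith)
  have hsum : Summable (fun N : ℕ => ((K N : ℝ) + 1) * (4 * Real.exp (-q * N))) := by
    have h1 : Summable (fun N : ℕ => ((L:ℝ) * 4) * ((N:ℝ) ^ 2 * r ^ N)) :=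
      (summable_pow_mul_geometric_of_norm_lt_one 2
        (by rwa [Real.norm_eq_abs, abs_of_pos hr0])).mul_left _
    have h2 : Summable (fun N : ℕ => (8:ℝ) * r ^ N) :=
      (summable_geometric_of_lt_one hr0.le hr1).mul_left _
    refine (h1.add h2).congr fun N => ?_
    have hexp : Real.exp (-q * N) = r ^ N := by
      rw [hr_def, ← Real.exp_nat_mul]
      congr 1
      ring
    rw [hK_cast, hexp]
    ring
  have hBC : ∀ᵐ ω ∂μ, ∀ᶠ N in atTop, ω ∉ E N := by
    apply ae_eventually_notMem
    have hle : ∑' N, μ (E N) ≤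
        ∑' N, ENNReal.ofReal (((K N : ℝ) + 1) * (4 * Real.exp (-q * N))) :=
      ENNReal.tsum_le_tsum hEbound
    rw [← ENNReal.ofReal_tsum_of_nonneg (fun N => by positivity) hsum] at hle
    exact ne_top_of_le_ne_top ENNReal.ofReal_ne_top hle
  -- final combination
  filter_upwards [hW_ae, hBC] with ω hWω hEω
  filter_upwards [hWω, hEω, eventually_ge_atTop 1] with N hWN hEN hN1
  intro β hβ
  have hNR : (0:ℝ) < (N:ℝ) := by exact_mod_cast hN1
  have hKN := hKpos N
  -- choose the grid point
  set j : ℕ := ⌊β * (K N : ℝ) / (2 * Real.pi)⌋₊ with hj_def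
  have hβ0 : 0 ≤ β := hβ.1
  have hβ2π : β ≤ 2 * Real.pi := hβ.2
  have hjle : (j:ℝ) * (2 * Real.pi) ≤ β * (K N : ℝ) := by
    have h := Nat.floor_le (show 0 ≤ β * (K N : ℝ) / (2 * Real.pi) by positivity)
    rw [← hj_def] at h
    calc (j:ℝ) * (2 * Real.pi) ≤ (β * (K N : ℝ) / (2 * Real.pi)) * (2 * Real.pi) := by
          gcongr
      _ = β * (K N : ℝ) := by field_simp
  have hjlt : β * (K N : ℝ) < ((j:ℝ) + 1) * (2 * Real.pi) := by
    have h := Nat.lt_floor_add_one (β * (K N : ℝ) / (2 * Real.pi))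
    rw [← hj_def] at h
    calc β * (K N : ℝ) = (β * (K N : ℝ) / (2 * Real.pi)) * (2 * Real.pi) := by field_simp
      _ < ((j:ℝ) + 1) * (2 * Real.pi) := by gcongr
  have hjK : j ∈ Finset.range (K N + 1) := by
    refine Finset.mem_range.2 (Nat.lt_succ_of_le ?_)
    refine Nat.floor_le_of_le ?_
    rw [div_le_iff₀ (by positivity)]
    nlinarith [hKpos N]
  set γ : ℝ := 2 * Real.pi * (j:ℝ) / (K N : ℝ) with hγ_def
  have hγle : γ ≤ β := by
    rw [hγ_def, div_le_iff₀ hKN]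
    nlinarith
  have hclose : |β - γ| ≤ 2 * Real.pi / (K N : ℝ) := by
    rw [abs_of_nonneg (sub_nonneg.2 hγle), sub_le_iff_le_add, hγ_def, ← add_div,
      le_div_iff₀ hKN]
    nlinarith
  -- the three pieces
  have hdecomp : (∑ t ∈ Finset.Icc 1 N, ε t ω * phase β t) =
      (∑ t ∈ Finset.Icc 1 N, (g (ε t ω) - m) * phase γ t)
      + (∑ t ∈ Finset.Icc 1 N, (g (ε t ω) - m) * (phase β t - phase γ t))
      + (∑ t ∈ Finset.Icc 1 N, (ε t ω - g (ε t ω) + m) * phase β t) := by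
    rw [← Finset.sum_add_distrib, ← Finset.sum_add_distrib]
    exact Finset.sum_congr rfl fun t _ => by ring
  -- piece 1 : grid Chernoff bound
  have hP1 : Complex.abs (∑ t ∈ Finset.Icc 1 N, (g (ε t ω) - m) * phase γ t) < δ / 4 * N := by
    by_contra hcon
    push_neg at hcon
    refine hEN ?_
    rw [hE_def]
    refine Set.mem_biUnion hjK ?_
    rw [Set.mem_setOf_eq, ← hγ_def]
    exact hcon
  -- piece 2 : Lipschitz bound
  have hP2 : Complex.abs (∑ t ∈ Finset.Icc 1 N, (g (ε t ω) - m) * (phase β t - phase γ t))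
      ≤ δ / 4 * N := by
    have hKbig : 2 * Real.pi * (N:ℝ) ^ 2 ≤ (K N : ℝ) := by
      rw [hK_cast]
      nlinarith [Real.pi_lt_d2, sq_nonneg (N:ℝ)]
    have hterm : ∀ t ∈ Finset.Icc 1 N,
        Complex.abs ((g (ε t ω) - m) * (phase β t - phase γ t)) ≤
          2 * c * (2 * (2 * Real.pi / (K N : ℝ) * (N:ℝ) ^ 2)) := by
      intro t ht
      have htN : (t:ℝ) ≤ (N:ℝ) := by exact_mod_cast (Finset.mem_Icc.1 ht).2
      have ht0 : (0:ℝ) ≤ (t:ℝ) := Nat.cast_nonneg _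
      have htsq : (t:ℝ) ^ 2 ≤ (N:ℝ) ^ 2 := by nlinarith
      have hsmall : |β - γ| * (t:ℝ) ^ 2 ≤ 1 := by
        have h1 : |β - γ| * (t:ℝ) ^ 2 ≤ 2 * Real.pi / (K N : ℝ) * (N:ℝ) ^ 2 := by
          have := abs_nonneg (β - γ)
          nlinarith [div_nonneg (by positivity : (0:ℝ) ≤ 2 * Real.pi) hKN.le]
        refine h1.trans ?_
        rw [div_mul_eq_mul_div, div_le_one hKN]
        nlinarith
      rw [map_mul]
      have h2 := abs_phase_sub_le t hsmall
      have h3 := hYb (ε t ω)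
      have h4 : |β - γ| * (t:ℝ) ^ 2 ≤ 2 * Real.pi / (K N : ℝ) * (N:ℝ) ^ 2 := by
        have := abs_nonneg (β - γ)
        nlinarith [div_nonneg (by positivity : (0:ℝ) ≤ 2 * Real.pi) hKN.le]
      have h5 : (0:ℝ) ≤ 2 * c := by positivity
      calc Complex.abs (g (ε t ω) - m) * Complex.abs (phase β t - phase γ t)
          ≤ 2 * c * (2 * (|β - γ| * (t:ℝ) ^ 2)) := by
            refine mul_le_mul h3 h2 (AbsoluteValue.nonneg _ _) h5
        _ ≤ 2 * c * (2 * (2 * Real.pi / (K N : ℝ) * (N:ℝ) ^ 2)) := by nlinarith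
    calc Complex.abs (∑ t ∈ Finset.Icc 1 N, (g (ε t ω) - m) * (phase β t - phase γ t))
        ≤ ∑ t ∈ Finset.Icc 1 N,
            Complex.abs ((g (ε t ω) - m) * (phase β t - phase γ t)) :=
          Complex.abs.sum_le _ _
      _ ≤ ∑ _t ∈ Finset.Icc 1 N, 2 * c * (2 * (2 * Real.pi / (K N : ℝ) * (N:ℝ) ^ 2)) :=
          Finset.sum_le_sum hterm
      _ = (N:ℝ) * (2 * c * (2 * (2 * Real.pi / (K N : ℝ) * (N:ℝ) ^ 2))) := by
          rw [Finset.sum_const, Nat.card_Icc, nsmul_eq_mul]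
          norm_num
      _ ≤ δ / 4 * N := by
          have hKge : 32 * Real.pi * c * (N:ℝ) ^ 2 ≤ δ * (K N : ℝ) := by
            rw [hK_cast]
            have h6 : 32 * Real.pi * c / δ * (N:ℝ)^2 ≤ (L:ℝ) * (N:ℝ)^2 := by
              nlinarith [sq_nonneg (N:ℝ)]
            rw [div_mul_eq_mul_div, div_le_iff₀ hδ] at h6
            nlinarith
          have hgoal : (N:ℝ) * (2 * c * (2 * (2 * Real.pi / (K N:ℝ) * (N:ℝ)^2))) =
              8 * Real.pi * c * (N:ℝ)^3 / (K N:ℝ) := by field_simp; ring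
          rw [hgoal, div_le_iff₀ hKN]
          nlinarith [mul_nonneg hNR.le (sub_nonneg.2 hKge)]
  -- piece 3 : tail part
  have hP3 : Complex.abs (∑ t ∈ Finset.Icc 1 N, (ε t ω - g (ε t ω) + m) * phase β t)
      ≤ δ / 2 * N := by
    calc Complex.abs (∑ t ∈ Finset.Icc 1 N, (ε t ω - g (ε t ω) + m) * phase β t)
        ≤ ∑ t ∈ Finset.Icc 1 N, Complex.abs ((ε t ω - g (ε t ω) + m) * phase β t) :=
          Complex.abs.sum_le _ _
      _ = ∑ t ∈ Finset.Icc 1 N, φ (ε t ω) := by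
          refine Finset.sum_congr rfl fun t _ => ?_
          rw [map_mul, abs_phase, mul_one, hφ_def]
      _ ≤ δ / 2 * N := hWN
  rw [hdecomp]
  calc Complex.abs (_ + _ + _) ≤ Complex.abs (_ + _) + Complex.abs _ := Complex.abs.add_le _ _
    _ ≤ Complex.abs _ + Complex.abs _ + Complex.abs _ :=
        add_le_add_left (Complex.abs.add_le _ _) _
    _ ≤ δ * N := by
        have := hP1.le
        linarith



lemma amp_le (y : ℕ → ℂ) (N : ℕ) (hN : 1 ≤ N) (M : ℝ) (θ : ℝ × ℝ × ℝ)
    (hθ : θ ∈ Theta1 M)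
    (hmin : IsMinOn (fun θ' => (1 / (N : ℝ)) * Q y N θ') (Theta1 M) θ) :
    (N : ℝ) * Complex.abs (θ.1 + θ.2.1 * Complex.I) ≤
      2 * Complex.abs (∑ t ∈ Finset.Icc 1 N, y t * phase θ.2.2 t) := by
  obtain ⟨hθ1, hθ2, hθ3⟩ := hθ
  have hM : 0 ≤ M := by
    have h1 := hθ1
    rw [Set.mem_Icc] at h1
    linarith [h1.1, h1.2]
  have h0mem : ((0:ℝ), (0:ℝ), θ.2.2) ∈ Theta1 M :=
    ⟨Set.mem_Icc.2 ⟨show -M ≤ 0 by linarith, show (0:ℝ) ≤ M from hM⟩,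
      Set.mem_Icc.2 ⟨show -M ≤ 0 by linarith, show (0:ℝ) ≤ M from hM⟩, hθ3⟩
  have hNR : (0:ℝ) < N := by exact_mod_cast hN
  have hQ : Q y N θ ≤ Q y N (0, 0, θ.2.2) := by
    have h := isMinOn_iff.1 hmin _ h0mem
    have h2 := mul_le_mul_of_nonneg_left h (le_of_lt hNR)
    rw [← mul_assoc, ← mul_assoc, mul_one_div, div_self hNR.ne', one_mul, one_mul] at h2
    exact h2
  set A : ℂ := ↑θ.1 + ↑θ.2.1 * Complex.I with hA_def
  set β : ℝ := θ.2.2 with hβ_def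
  set T : ℂ := ∑ t ∈ Finset.Icc 1 N, y t * phase β t with hT_def
  have habs_exp : ∀ t : ℕ, Complex.abs (Complex.exp (Complex.I * (β:ℂ) * (t:ℂ) ^ 2)) = 1 := by
    intro t
    have h : Complex.I * (β:ℂ) * ((t:ℕ):ℂ) ^ 2 = ((β * (t:ℝ) ^ 2 : ℝ) : ℂ) * Complex.I := by
      push_cast; ring
    rw [h, Complex.abs_exp_ofReal_mul_I]
  have hconj_exp : ∀ t : ℕ,
      (starRingEnd ℂ) (Complex.exp (Complex.I * (β:ℂ) * (t:ℂ) ^ 2)) = phase β t := by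
    intro t
    rw [← Complex.exp_conj]
    rw [phase]
    congr 1
    rw [map_mul, map_mul, Complex.conj_I, map_pow, Complex.conj_ofReal, Complex.conj_natCast]
    ring
  have h1 : ∀ t : ℕ, Complex.normSq (chirp A β t) = Complex.normSq A := by
    intro t
    rw [chirp, Complex.normSq_mul, ← Complex.sq_abs (Complex.exp _), habs_exp t, one_pow, mul_one]
  have h2 : ∀ t : ℕ, (starRingEnd ℂ) (chirp A β t) = (starRingEnd ℂ) A * phase β t := by
    intro t
    rw [chirp, map_mul, hconj_exp]
  have hexpand : ∀ t : ℕ,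
      Complex.abs (y t - chirp A β t) ^ 2 =
        Complex.abs (y t) ^ 2 + Complex.normSq A -
          2 * ((starRingEnd ℂ) A * (y t * phase β t)).re := by
    intro t
    rw [Complex.sq_abs, Complex.sq_abs, Complex.normSq_sub, h1, h2,
      show y t * ((starRingEnd ℂ) A * phase β t) = (starRingEnd ℂ) A * (y t * phase β t)
        from by ring]
  have hQθ : Q y N θ = (∑ t ∈ Finset.Icc 1 N, Complex.abs (y t) ^ 2)
      + (N : ℝ) * Complex.normSq A - 2 * ((starRingEnd ℂ) A * T).re := by
    calc Q y N θ = ∑ t ∈ Finset.Icc 1 N,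
        (Complex.abs (y t) ^ 2 + Complex.normSq A -
          2 * ((starRingEnd ℂ) A * (y t * phase β t)).re) :=
          Finset.sum_congr rfl fun t _ => hexpand t
      _ = _ := by
          rw [Finset.sum_sub_distrib, Finset.sum_add_distrib, Finset.sum_const, Nat.card_Icc,
            nsmul_eq_mul, ← Finset.mul_sum, ← Complex.re_sum, ← Finset.mul_sum, ← hT_def]
          norm_num
  have hQ0 : Q y N (0, 0, θ.2.2) = ∑ t ∈ Finset.Icc 1 N, Complex.abs (y t) ^ 2 := by
    rw [Q]
    refine Finset.sum_congr rfl fun t _ => ?_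
    norm_num [chirp, Complex.norm_eq_abs]
  rw [hQθ, hQ0] at hQ
  have hre : ((starRingEnd ℂ) A * T).re ≤ Complex.abs A * Complex.abs T := by
    calc ((starRingEnd ℂ) A * T).re ≤ Complex.abs ((starRingEnd ℂ) A * T) := Complex.re_le_abs _
      _ = Complex.abs A * Complex.abs T := by rw [map_mul, Complex.abs_conj]
  have hkey : (N : ℝ) * Complex.abs A ^ 2 ≤ 2 * (Complex.abs A * Complex.abs T) := by
    rw [← Complex.sq_abs] at hQ
    linarith
  rcases eq_or_lt_of_le (AbsoluteValue.nonneg Complex.abs A) with h0 | h0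
  · rw [← h0, mul_zero]
    positivity
  · refine le_of_mul_le_mul_right ?_ h0
    calc (N : ℝ) * Complex.abs A * Complex.abs A = (N : ℝ) * Complex.abs A ^ 2 := by ring
      _ ≤ 2 * (Complex.abs A * Complex.abs T) := hkey
      _ = 2 * Complex.abs T * Complex.abs A := by ring


end UniformSLLNAux


/-- **Lemma (statement 18).** If the `ε(t)` satisfy Assumption 1 and `(Â_R, Â_I, β̂)`
minimizes `Q_{p+1}(θ) = (1/N) Σ_{t=1}^N |ε(t) − A e^{i β t²}|²` over amplitudes
`A = A_R + i A_I ∈ [−M, M] + i [−M, M]` and frequency rates `β ∈ [0, 2π]`, then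
`Â_R → 0` and `Â_I → 0` almost surely as `N → ∞`. -/


theorem lse_noise_fit_amplitudes_to_zero
    {Ω : Type*} [MeasurableSpace Ω] (μ : Measure Ω) [IsProbabilityMeasure μ]
    (ε : ℕ → Ω → ℂ) (σ2 : ℝ)
    (hA1 : Assumption1 μ ε σ2)
    (M : ℝ)
    (θhat : ℕ → Ω → ℝ × ℝ × ℝ)
    (hmem : ∀ N ω, θhat N ω ∈ Theta1 M)
    (hmin : ∀ (N : ℕ) (ω : Ω), IsMinOn (fun θ => (1 / (N : ℝ)) * Q (fun t => ε t ω) N θ)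
      (Theta1 M) (θhat N ω)) :
    ∀ᵐ ω ∂μ,
      Tendsto (fun N => (θhat N ω).1) atTop (𝓝 0) ∧
      Tendsto (fun N => (θhat N ω).2.1) atTop (𝓝 0) := by
  -- integrability and zero mean of the noise
  have hint : Integrable (ε 0) μ := by
    refine ((integrable_const (1:ℝ)).add (hA1.fourth_moment 0)).mono'
      (hA1.measurable 0).aestronglyMeasurable (ae_of_all _ fun ω => ?_)
    simp only [Pi.add_apply, Complex.norm_eq_abs]
    rcases le_or_gt (Complex.abs (ε 0 ω)) 1 with h | h
    · have : (0:ℝ) ≤ Complex.abs (ε 0 ω) ^ 4 := by positivity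
      linarith
    · have h4 : Complex.abs (ε 0 ω) ≤ Complex.abs (ε 0 ω) ^ 4 :=
        le_self_pow₀ h.le (by norm_num)
      linarith
  have hmeanC : ∀ t, ∫ ω, ε t ω ∂μ = 0 := by
    intro t
    have hintt : Integrable (ε t) μ := (hA1.identDistrib t 0).integrable_iff.2 hint
    apply Complex.ext
    · have h := integral_re (𝕜 := ℂ) hintt
      simp only [RCLike.re_to_complex] at h
      rw [← h, hA1.mean_re t]
      simp
    · have h := integral_im (𝕜 := ℂ) hintt
      simp only [RCLike.im_to_complex] at h
      rw [← h, hA1.mean_im t]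
      simp
  have hU : ∀ᵐ ω ∂μ, ∀ k : ℕ, ∀ᶠ N : ℕ in atTop, ∀ β ∈ Set.Icc (0:ℝ) (2 * Real.pi),
      Complex.abs (∑ t ∈ Finset.Icc 1 N, ε t ω * phase β t) ≤ (1 / ((k:ℝ) + 1)) * N :=
    ae_all_iff.2 fun k => uniform_chirp ε hA1.measurable hA1.indep hA1.identDistrib hint hmeanC
      (δ := 1 / ((k:ℝ) + 1)) (by positivity)
  filter_upwards [hU] with ω hω
  have key : ∀ r : ℝ, 0 < r → ∀ᶠ N : ℕ in atTop,
      Complex.abs (((θhat N ω).1 : ℂ) + ((θhat N ω).2.1 : ℂ) * Complex.I) < r := by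
    intro r hr
    obtain ⟨k, hk⟩ := exists_nat_gt (2 / r)
    have hklt : 2 / ((k:ℝ) + 1) < r := by
      rw [div_lt_iff₀ (by positivity)]
      rw [div_lt_iff₀ hr] at hk
      nlinarith [hr]
    filter_upwards [hω k, eventually_ge_atTop 1] with N hN hN1
    have hNR : (0:ℝ) < N := by exact_mod_cast hN1
    have hβmem : (θhat N ω).2.2 ∈ Set.Icc (0:ℝ) (2 * Real.pi) := (hmem N ω).2.2
    have h1 := amp_le (fun t => ε t ω) N hN1 M (θhat N ω) (hmem N ω) (hmin N ω)
    have h2 := hN _ hβmem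
    have h3 : (N:ℝ) * Complex.abs (((θhat N ω).1 : ℂ) + ((θhat N ω).2.1 : ℂ) * Complex.I) ≤
        2 * ((1 / ((k:ℝ) + 1)) * N) := by
      refine h1.trans ?_
      have := AbsoluteValue.nonneg Complex.abs
        (∑ t ∈ Finset.Icc 1 N, ε t ω * phase (θhat N ω).2.2 t)
      linarith
    have h4 : Complex.abs (((θhat N ω).1 : ℂ) + ((θhat N ω).2.1 : ℂ) * Complex.I) ≤
        2 / ((k:ℝ) + 1) := by
      have hkpos : (0:ℝ) < (k:ℝ) + 1 := by positivity
      rw [div_eq_mul_inv]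
      refine le_of_mul_le_mul_left ?_ hNR
      calc (N:ℝ) * Complex.abs _ ≤ 2 * ((1 / ((k:ℝ) + 1)) * N) := h3
        _ = (N:ℝ) * (2 * ((k:ℝ) + 1)⁻¹) := by field_simp
    exact lt_of_le_of_lt h4 hklt
  constructor
  · refine NormedAddCommGroup.tendsto_nhds_zero.2 fun r hr => ?_
    filter_upwards [key r hr] with N hN
    rw [Real.norm_eq_abs]
    refine lt_of_le_of_lt ?_ hN
    have hre : (θhat N ω).1 =
        ((((θhat N ω).1 : ℂ) + ((θhat N ω).2.1 : ℂ) * Complex.I)).re := by simp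
    calc |(θhat N ω).1|
        = |((((θhat N ω).1 : ℂ) + ((θhat N ω).2.1 : ℂ) * Complex.I)).re| := by rw [← hre]
      _ ≤ _ := Complex.abs_re_le_abs _
  · refine NormedAddCommGroup.tendsto_nhds_zero.2 fun r hr => ?_
    filter_upwards [key r hr] with N hN
    rw [Real.norm_eq_abs]
    refine lt_of_le_of_lt ?_ hN
    have him : (θhat N ω).2.1 =
        ((((θhat N ω).1 : ℂ) + ((θhat N ω).2.1 : ℂ) * Complex.I)).im := by simp
    calc |(θhat N ω).2.1|
        = |((((θhat N ω).1 : ℂ) + ((θhat N ω).2.1 : ℂ) * Complex.I)).im| := by rw [← him]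
      _ ≤ _ := Complex.abs_im_le_abs _
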